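/- The four-element algebra B⁻ on {1,2,a,∞} satisfies every equation valid in ⟨ℕ; +, ·, ↑, 1⟩, the positive natural numbers with addition, multiplication, exponentiation and constant 1: for all terms s, t in the signature {+,·,↑,1} in m variables, if s and t evaluate equally under every assignment of the variables into the positive natural numbers, then s and t evaluate equally under every assignment into B⁻. -/

import Mathlib

/-- Terms in the signature {+, ·, ↑, 1} in `m` variables. -/
inductive PTerm (m : ℕ) : Type
  | var : Fin m → PTerm m
  | one : PTerm m
  | add : PTerm m → PTerm m → PTerm m
  | mul : PTerm m → PTerm m → PTerm m
  | pow : PTerm m → PTerm m → PTerm m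

/-- Evaluation over the natural numbers. -/
def PTerm.evalN {m : ℕ} (φ : Fin m → ℕ) : PTerm m → ℕ
  | .var i => φ i
  | .one => 1
  | .add s t => s.evalN φ + t.evalN φ
  | .mul s t => s.evalN φ * t.evalN φ
  | .pow s t => (s.evalN φ) ^ (t.evalN φ)

/-- The four-element universe {1, 2, a, ∞} of the algebra B⁻. -/
inductive B4 : Type
  | e1 | e2 | ea | einf
  deriving DecidableEq

namespace B4

def add : B4 → B4 → B4
  | e1, e1 => e2
  | e1, e2 => e2
  | e2, e1 => e2
  | e2, e2 => e2
  | ea, ea => ea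
  | _, _ => einf

def mul : B4 → B4 → B4
  | e1, x => x
  | x, e1 => x
  | e2, e2 => e2
  | e2, ea => ea
  | ea, e2 => ea
  | _, _ => einf

def pow : B4 → B4 → B4
  | e1, _ => e1
  | x, e1 => x
  | e2, e2 => e2
  | _, _ => einf

end B4

/-- Evaluation of {+, ·, ↑, 1}-terms in the four-element algebra B⁻. -/
def PTerm.evalB {m : ℕ} (φ : Fin m → B4) : PTerm m → B4
  | .var i => φ i
  | .one => B4.e1
  | .add s t => B4.add (s.evalB φ) (t.evalB φ)
  | .mul s t => B4.mul (s.evalB φ) (t.evalB φ)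
  | .pow s t => B4.pow (s.evalB φ) (t.evalB φ)

namespace BminusProof

/-- The substitution families: for each element of B⁻ a function of a parameter `n`. -/
def psi : B4 → ℕ → ℕ
  | .e1 => fun _ => 1
  | .e2 => fun _ => 2
  | .ea => fun n => n + 1
  | .einf => fun n => (n + 1) ^ 2

/-- The growth class associated to an element of B⁻. -/
def Inv : B4 → (ℕ → ℕ) → Prop
  | .e1 => fun f => f = fun _ => 1
  | .e2 => fun f => ∃ c, 2 ≤ c ∧ f = fun _ => c
  | .ea => fun f => ∃ c, 1 ≤ c ∧ f = fun n => c * (n + 1)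
  | .einf => fun f =>
      (∃ c d, 1 ≤ c ∧ 1 ≤ d ∧ f = fun n => c * (n + 1) + d) ∨
      ((∀ n, 1 ≤ f n) ∧ ∃ N, ∀ n, N ≤ n → (n + 1) ^ 2 ≤ f n)

lemma Inv.pos {b f} (h : Inv b f) : ∀ n, 1 ≤ f n := by
  cases b
  · subst h; intro n; exact le_refl 1
  · obtain ⟨c, hc, rfl⟩ := h; intro n; show 1 ≤ c; omega
  · obtain ⟨c, hc, rfl⟩ := h; intro n; show 1 ≤ c * (n + 1); nlinarith
  · rcases h with ⟨c, d, hc, hd, rfl⟩ | ⟨h1, _⟩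
    · intro n; show 1 ≤ c * (n + 1) + d; omega
    · exact h1

lemma inv_big {f : ℕ → ℕ} (h1 : ∀ n, 1 ≤ f n) (N : ℕ)
    (h2 : ∀ n, N ≤ n → (n + 1) ^ 2 ≤ f n) : Inv B4.einf f :=
  Or.inr ⟨h1, N, h2⟩

lemma Inv.ev_lin {b f} (h : Inv b f) (hb : b = B4.ea ∨ b = B4.einf) :
    ∃ N, ∀ n, N ≤ n → n + 1 ≤ f n := by
  cases b
  · rcases hb with h' | h' <;> exact absurd h' (by simp)
  · rcases hb with h' | h' <;> exact absurd h' (by simp)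
  · obtain ⟨c, hc, rfl⟩ := h
    exact ⟨0, fun n _ => by show n + 1 ≤ c * (n + 1); nlinarith⟩
  · rcases h with ⟨c, d, hc, hd, rfl⟩ | ⟨h1, N, hN⟩
    · exact ⟨0, fun n _ => by show n + 1 ≤ c * (n + 1) + d; nlinarith⟩
    · exact ⟨N, fun n hn => le_trans (by nlinarith) (hN n hn)⟩

lemma Inv.ev_two {b f} (h : Inv b f) (hb : b ≠ B4.e1) :
    ∃ N, ∀ n, N ≤ n → 2 ≤ f n := by
  cases b
  · exact absurd rfl hb
  · obtain ⟨c, hc, rfl⟩ := h; exact ⟨0, fun n _ => hc⟩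
  · obtain ⟨c, hc, rfl⟩ := h
    exact ⟨1, fun n hn => by show 2 ≤ c * (n + 1); nlinarith⟩
  · rcases h with ⟨c, d, hc, hd, rfl⟩ | ⟨h1, N, hN⟩
    · exact ⟨0, fun n _ => by show 2 ≤ c * (n + 1) + d; nlinarith⟩
    · exact ⟨N + 1, fun n hn => le_trans (by nlinarith) (hN n (by omega))⟩

lemma sq_le_two_pow : ∀ k, 4 ≤ k → k ^ 2 ≤ 2 ^ k := by
  intro k
  induction k with
  | zero => intro h; omega
  | succ k ih =>
    intro hk
    rcases Nat.lt_or_ge k 4 with h | h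
    · have hk3 : k = 3 := by omega
      subst hk3; norm_num
    · have h2 := ih (by omega)
      calc (k + 1) ^ 2 ≤ 2 * k ^ 2 := by nlinarith
        _ ≤ 2 * 2 ^ k := by omega
        _ = 2 ^ (k + 1) := by ring

/-- base eventually ≥ n+1 and exponent eventually ≥ 2 gives the "big" class. -/
lemma pow_big1 {f g : ℕ → ℕ} (pf : ∀ n, 1 ≤ f n)
    (N1 : ℕ) (hf : ∀ n, N1 ≤ n → n + 1 ≤ f n)
    (N2 : ℕ) (hg : ∀ n, N2 ≤ n → 2 ≤ g n) :
    Inv B4.einf (fun n => f n ^ g n) := by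
  apply inv_big (fun n => Nat.one_le_pow _ _ (pf n)) (max N1 N2)
  intro n hn
  show (n + 1) ^ 2 ≤ f n ^ g n
  calc (n + 1) ^ 2 ≤ (f n) ^ 2 :=
        Nat.pow_le_pow_left (hf n (le_trans (le_max_left _ _) hn)) 2
    _ ≤ (f n) ^ (g n) :=
        Nat.pow_le_pow_right (pf n) (hg n (le_trans (le_max_right _ _) hn))

/-- base ≥ 2 everywhere and exponent eventually ≥ n+1 gives the "big" class. -/
lemma pow_big2 {f g : ℕ → ℕ} (pf : ∀ n, 2 ≤ f n)
    (N2 : ℕ) (hg : ∀ n, N2 ≤ n → n + 1 ≤ g n) :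
    Inv B4.einf (fun n => f n ^ g n) := by
  apply inv_big (fun n => Nat.one_le_pow _ _ (by have := pf n; omega)) (max N2 3)
  intro n hn
  have hn2 : N2 ≤ n := le_trans (le_max_left _ _) hn
  have hn3 : 3 ≤ n := le_trans (le_max_right _ _) hn
  show (n + 1) ^ 2 ≤ f n ^ g n
  calc (n + 1) ^ 2 ≤ 2 ^ (n + 1) := sq_le_two_pow (n + 1) (by omega)
    _ ≤ (f n) ^ (n + 1) := Nat.pow_le_pow_left (pf n) _
    _ ≤ (f n) ^ (g n) := Nat.pow_le_pow_right (by have := pf n; omega) (hg n hn2)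

lemma mul_lin_big {f g : ℕ → ℕ} (hf : ∀ n, n + 1 ≤ f n) (hg : ∀ n, n + 1 ≤ g n) :
    Inv B4.einf (fun n => f n * g n) := by
  apply inv_big (fun n => Nat.mul_pos (le_trans (by omega) (hf n)) (le_trans (by omega) (hg n))) 0
  intro n _
  show (n + 1) ^ 2 ≤ f n * g n
  rw [pow_two]
  exact Nat.mul_le_mul (hf n) (hg n)

lemma mul_big_r {f g : ℕ → ℕ} (pf : ∀ n, 1 ≤ f n) (pg : ∀ n, 1 ≤ g n)
    (N : ℕ) (hg : ∀ n, N ≤ n → (n + 1) ^ 2 ≤ g n) :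
    Inv B4.einf (fun n => f n * g n) := by
  apply inv_big (fun n => Nat.mul_pos (pf n) (pg n)) N
  intro n hn
  show (n + 1) ^ 2 ≤ f n * g n
  calc (n + 1) ^ 2 ≤ g n := hg n hn
    _ ≤ f n * g n := Nat.le_mul_of_pos_left _ (pf n)

lemma mul_big_l {f g : ℕ → ℕ} (pf : ∀ n, 1 ≤ f n) (pg : ∀ n, 1 ≤ g n)
    (N : ℕ) (hf : ∀ n, N ≤ n → (n + 1) ^ 2 ≤ f n) :
    Inv B4.einf (fun n => f n * g n) := by
  apply inv_big (fun n => Nat.mul_pos (pf n) (pg n)) N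
  intro n hn
  show (n + 1) ^ 2 ≤ f n * g n
  calc (n + 1) ^ 2 ≤ f n := hf n hn
    _ ≤ f n * g n := Nat.le_mul_of_pos_right _ (pg n)

lemma add_big_r {f g : ℕ → ℕ} (pf : ∀ n, 1 ≤ f n) (pg : ∀ n, 1 ≤ g n)
    (N : ℕ) (hg : ∀ n, N ≤ n → (n + 1) ^ 2 ≤ g n) :
    Inv B4.einf (fun n => f n + g n) := by
  apply inv_big (fun n => by have := pf n; omega) N
  intro n hn
  show (n + 1) ^ 2 ≤ f n + g n
  have := hg n hn; omega

lemma add_big_l {f g : ℕ → ℕ} (pf : ∀ n, 1 ≤ f n) (pg : ∀ n, 1 ≤ g n)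
    (N : ℕ) (hf : ∀ n, N ≤ n → (n + 1) ^ 2 ≤ f n) :
    Inv B4.einf (fun n => f n + g n) := by
  apply inv_big (fun n => by have := pf n; omega) N
  intro n hn
  show (n + 1) ^ 2 ≤ f n + g n
  have := hf n hn; omega

lemma inv_add {b1 b2 f g} (h1 : Inv b1 f) (h2 : Inv b2 g) :
    Inv (B4.add b1 b2) (fun n => f n + g n) := by
  have p1 := h1.pos
  have p2 := h2.pos
  cases b1 <;> cases b2
  -- (e1, e1)
  · exact ⟨2, le_refl 2, by rw [h1, h2]; funext n; norm_num⟩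
  -- (e1, e2)
  · obtain ⟨c, hc, rfl⟩ := h2
    exact ⟨1 + c, by omega, by rw [h1]⟩
  -- (e1, ea)
  · obtain ⟨c, hc, rfl⟩ := h2
    exact Or.inl ⟨c, 1, hc, le_refl 1, by rw [h1]; funext n; show 1 + c * (n + 1) = _; ring⟩
  -- (e1, einf)
  · rcases h2 with ⟨c, d, hc, hd, rfl⟩ | ⟨hg1, N, hN⟩
    · exact Or.inl ⟨c, d + 1, hc, by omega,
        by rw [h1]; funext n; show 1 + (c * (n + 1) + d) = _; ring⟩
    · exact add_big_r p1 p2 N hN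
  -- (e2, e1)
  · obtain ⟨c, hc, rfl⟩ := h1
    exact ⟨c + 1, by omega, by rw [h2]⟩
  -- (e2, e2)
  · obtain ⟨c, hc, rfl⟩ := h1
    obtain ⟨c', hc', rfl⟩ := h2
    exact ⟨c + c', by omega, rfl⟩
  -- (e2, ea)
  · obtain ⟨c, hc, rfl⟩ := h1
    obtain ⟨c', hc', rfl⟩ := h2
    exact Or.inl ⟨c', c, hc', by omega, by funext n; show c + c' * (n + 1) = _; ring⟩
  -- (e2, einf)
  · obtain ⟨c, hc, rfl⟩ := h1
    rcases h2 with ⟨c', d, hc', hd, rfl⟩ | ⟨hg1, N, hN⟩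
    · exact Or.inl ⟨c', d + c, hc', by omega,
        by funext n; show c + (c' * (n + 1) + d) = _; ring⟩
    · exact add_big_r p1 p2 N hN
  -- (ea, e1)
  · obtain ⟨c, hc, rfl⟩ := h1
    exact Or.inl ⟨c, 1, hc, le_refl 1, by rw [h2]⟩
  -- (ea, e2)
  · obtain ⟨c, hc, rfl⟩ := h1
    obtain ⟨c', hc', rfl⟩ := h2
    exact Or.inl ⟨c, c', hc, by omega, rfl⟩
  -- (ea, ea)
  · obtain ⟨c, hc, rfl⟩ := h1
    obtain ⟨c', hc', rfl⟩ := h2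
    exact ⟨c + c', by omega, by funext n; show c * (n + 1) + c' * (n + 1) = _; ring⟩
  -- (ea, einf)
  · obtain ⟨c, hc, rfl⟩ := h1
    rcases h2 with ⟨c', d, hc', hd, rfl⟩ | ⟨hg1, N, hN⟩
    · exact Or.inl ⟨c + c', d, by omega, hd,
        by funext n; show c * (n + 1) + (c' * (n + 1) + d) = _; ring⟩
    · exact add_big_r p1 p2 N hN
  -- (einf, e1)
  · rcases h1 with ⟨c, d, hc, hd, rfl⟩ | ⟨hf1, N, hN⟩
    · exact Or.inl ⟨c, d + 1, hc, by omega,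
        by rw [h2]; funext n; show c * (n + 1) + d + 1 = _; ring⟩
    · exact add_big_l p1 p2 N hN
  -- (einf, e2)
  · obtain ⟨c', hc', rfl⟩ := h2
    rcases h1 with ⟨c, d, hc, hd, rfl⟩ | ⟨hf1, N, hN⟩
    · exact Or.inl ⟨c, d + c', hc, by omega,
        by funext n; show c * (n + 1) + d + c' = _; ring⟩
    · exact add_big_l p1 p2 N hN
  -- (einf, ea)
  · obtain ⟨c', hc', rfl⟩ := h2
    rcases h1 with ⟨c, d, hc, hd, rfl⟩ | ⟨hf1, N, hN⟩
    · exact Or.inl ⟨c + c', d, by omega, hd,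
        by funext n; show c * (n + 1) + d + c' * (n + 1) = _; ring⟩
    · exact add_big_l p1 p2 N hN
  -- (einf, einf)
  · rcases h1 with ⟨c, d, hc, hd, rfl⟩ | ⟨hf1, N, hN⟩
    · rcases h2 with ⟨c', d', hc', hd', rfl⟩ | ⟨hg1, N', hN'⟩
      · exact Or.inl ⟨c + c', d + d', by omega, by omega,
          by funext n; show c * (n + 1) + d + (c' * (n + 1) + d') = _; ring⟩
      · exact add_big_r p1 p2 N' hN'
    · exact add_big_l p1 p2 N hN

lemma inv_mul {b1 b2 f g} (h1 : Inv b1 f) (h2 : Inv b2 g) :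
    Inv (B4.mul b1 b2) (fun n => f n * g n) := by
  have p1 := h1.pos
  have p2 := h2.pos
  cases b1 <;> cases b2
  -- (e1, e1)
  · rw [h1]; simpa [B4.mul] using h2
  -- (e1, e2)
  · rw [h1]; simpa [B4.mul] using h2
  -- (e1, ea)
  · rw [h1]; simpa [B4.mul] using h2
  -- (e1, einf)
  · rw [h1]; simpa [B4.mul] using h2
  -- (e2, e1)
  · rw [h2]; simpa [B4.mul] using h1
  -- (e2, e2)
  · obtain ⟨c, hc, rfl⟩ := h1
    obtain ⟨c', hc', rfl⟩ := h2
    exact ⟨c * c', by nlinarith, rfl⟩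
  -- (e2, ea)
  · obtain ⟨c, hc, rfl⟩ := h1
    obtain ⟨c', hc', rfl⟩ := h2
    exact ⟨c * c', by nlinarith, by funext n; show c * (c' * (n + 1)) = _; ring⟩
  -- (e2, einf)
  · obtain ⟨c, hc, rfl⟩ := h1
    rcases h2 with ⟨c', d, hc', hd, rfl⟩ | ⟨hg1, N, hN⟩
    · exact Or.inl ⟨c * c', c * d, by nlinarith, by nlinarith,
        by funext n; show c * (c' * (n + 1) + d) = _; ring⟩
    · exact mul_big_r p1 p2 N hN
  -- (ea, e1)
  · rw [h2]; simpa [B4.mul] using h1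
  -- (ea, e2)
  · obtain ⟨c, hc, rfl⟩ := h1
    obtain ⟨c', hc', rfl⟩ := h2
    exact ⟨c * c', by nlinarith, by funext n; show c * (n + 1) * c' = _; ring⟩
  -- (ea, ea)
  · obtain ⟨c, hc, rfl⟩ := h1
    obtain ⟨c', hc', rfl⟩ := h2
    exact mul_lin_big (fun n => by show n + 1 ≤ c * (n + 1); nlinarith)
      (fun n => by show n + 1 ≤ c' * (n + 1); nlinarith)
  -- (ea, einf)
  · obtain ⟨c, hc, rfl⟩ := h1
    rcases h2 with ⟨c', d, hc', hd, rfl⟩ | ⟨hg1, N, hN⟩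
    · exact mul_lin_big (fun n => by show n + 1 ≤ c * (n + 1); nlinarith)
        (fun n => by show n + 1 ≤ c' * (n + 1) + d; nlinarith)
    · exact mul_big_r p1 p2 N hN
  -- (einf, e1)
  · rw [h2]; simpa [B4.mul] using h1
  -- (einf, e2)
  · obtain ⟨c', hc', rfl⟩ := h2
    rcases h1 with ⟨c, d, hc, hd, rfl⟩ | ⟨hf1, N, hN⟩
    · exact Or.inl ⟨c * c', d * c', by nlinarith, by nlinarith,
        by funext n; show (c * (n + 1) + d) * c' = _; ring⟩
    · exact mul_big_l p1 p2 N hN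
  -- (einf, ea)
  · obtain ⟨c', hc', rfl⟩ := h2
    rcases h1 with ⟨c, d, hc, hd, rfl⟩ | ⟨hf1, N, hN⟩
    · exact mul_lin_big (fun n => by show n + 1 ≤ c * (n + 1) + d; nlinarith)
        (fun n => by show n + 1 ≤ c' * (n + 1); nlinarith)
    · exact mul_big_l p1 p2 N hN
  -- (einf, einf)
  · rcases h1 with ⟨c, d, hc, hd, rfl⟩ | ⟨hf1, N, hN⟩
    · rcases h2 with ⟨c', d', hc', hd', rfl⟩ | ⟨hg1, N', hN'⟩
      · exact mul_lin_big (fun n => by show n + 1 ≤ c * (n + 1) + d; nlinarith)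
          (fun n => by show n + 1 ≤ c' * (n + 1) + d'; nlinarith)
      · exact mul_big_r p1 p2 N' hN'
    · exact mul_big_l p1 p2 N hN

lemma inv_pow {b1 b2 f g} (h1 : Inv b1 f) (h2 : Inv b2 g) :
    Inv (B4.pow b1 b2) (fun n => f n ^ g n) := by
  have p1 := h1.pos
  have p2 := h2.pos
  cases b1 <;> cases b2
  -- (e1, *)
  · rw [h1]; funext n; simp
  · rw [h1]; funext n; simp
  · rw [h1]; funext n; simp
  · rw [h1]; funext n; simp
  -- (e2, e1)
  · rw [h2]; simpa [B4.pow] using h1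
  -- (e2, e2)
  · obtain ⟨c, hc, rfl⟩ := h1
    obtain ⟨c', hc', rfl⟩ := h2
    exact ⟨c ^ c', le_trans hc (Nat.le_self_pow (by omega) c), rfl⟩
  -- (e2, ea)
  · obtain ⟨c, hc, rfl⟩ := h1
    obtain ⟨N, hN⟩ := h2.ev_lin (Or.inl rfl)
    exact pow_big2 (fun n => hc) N hN
  -- (e2, einf)
  · obtain ⟨c, hc, rfl⟩ := h1
    obtain ⟨N, hN⟩ := h2.ev_lin (Or.inr rfl)
    exact pow_big2 (fun n => hc) N hN
  -- (ea, e1)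
  · rw [h2]; simpa [B4.pow] using h1
  -- (ea, e2)
  · obtain ⟨N1, hN1⟩ := h1.ev_lin (Or.inl rfl)
    obtain ⟨N2, hN2⟩ := h2.ev_two (by simp)
    exact pow_big1 p1 N1 hN1 N2 hN2
  -- (ea, ea)
  · obtain ⟨N1, hN1⟩ := h1.ev_lin (Or.inl rfl)
    obtain ⟨N2, hN2⟩ := h2.ev_two (by simp)
    exact pow_big1 p1 N1 hN1 N2 hN2
  -- (ea, einf)
  · obtain ⟨N1, hN1⟩ := h1.ev_lin (Or.inl rfl)
    obtain ⟨N2, hN2⟩ := h2.ev_two (by simp)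
    exact pow_big1 p1 N1 hN1 N2 hN2
  -- (einf, e1)
  · rw [h2]; simpa [B4.pow] using h1
  -- (einf, e2)
  · obtain ⟨N1, hN1⟩ := h1.ev_lin (Or.inr rfl)
    obtain ⟨N2, hN2⟩ := h2.ev_two (by simp)
    exact pow_big1 p1 N1 hN1 N2 hN2
  -- (einf, ea)
  · obtain ⟨N1, hN1⟩ := h1.ev_lin (Or.inr rfl)
    obtain ⟨N2, hN2⟩ := h2.ev_two (by simp)
    exact pow_big1 p1 N1 hN1 N2 hN2
  -- (einf, einf)
  · obtain ⟨N1, hN1⟩ := h1.ev_lin (Or.inr rfl)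
    obtain ⟨N2, hN2⟩ := h2.ev_two (by simp)
    exact pow_big1 p1 N1 hN1 N2 hN2

lemma inv_unique {b b' : B4} {f} (h : Inv b f) (h' : Inv b' f) : b = b' := by
  have key : ∀ (x y : B4), Inv x f → Inv y f → x ≠ y → False := by
    clear h h' b b'
    intro x y hx hy hxy
    cases x <;> cases y <;> try exact hxy rfl
    all_goals clear hxy
    -- e1/e2
    · obtain ⟨c, hc, hf⟩ := hy
      have e0 := congrFun (hx.symm.trans hf) 0
      omega
    -- e1/ea
    · obtain ⟨c, hc, hf⟩ := hy
      have e0 := congrFun (hx.symm.trans hf) 1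
      simp at e0; omega
    -- e1/einf
    · rcases hy with ⟨c, d, hc, hd, hf⟩ | ⟨_, N, hN⟩
      · have e0 := congrFun (hx.symm.trans hf) 0
        simp at e0; omega
      · have h2 := hN (N + 1) (by omega)
        rw [hx] at h2; simp at h2
    -- e2/e1
    · obtain ⟨c, hc, hf⟩ := hx
      have e0 := congrFun (hy.symm.trans hf) 0
      omega
    -- e2/ea
    · obtain ⟨c, hc, hf⟩ := hx
      obtain ⟨c', hc', hg⟩ := hy
      have e0 := congrFun (hf.symm.trans hg) 0
      have e1 := congrFun (hf.symm.trans hg) 1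
      simp at e0 e1; omega
    -- e2/einf
    · obtain ⟨c, hc, hf⟩ := hx
      rcases hy with ⟨c', d, hc', hd, hg⟩ | ⟨_, N, hN⟩
      · have e0 := congrFun (hf.symm.trans hg) 0
        have e1 := congrFun (hf.symm.trans hg) 1
        simp at e0 e1; omega
      · have h2 := hN (N + c) (by omega)
        rw [hf] at h2; simp at h2
        have h3 := Nat.le_self_pow (two_ne_zero) (N + c + 1)
        omega
    -- ea/e1
    · obtain ⟨c, hc, hf⟩ := hx
      have e0 := congrFun (hy.symm.trans hf) 1
      simp at e0; omega
    -- ea/e2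
    · obtain ⟨c, hc, hf⟩ := hx
      obtain ⟨c', hc', hg⟩ := hy
      have e0 := congrFun (hf.symm.trans hg) 0
      have e1 := congrFun (hf.symm.trans hg) 1
      simp at e0 e1; omega
    -- ea/einf
    · obtain ⟨c, hc, hf⟩ := hx
      rcases hy with ⟨c', d, hc', hd, hg⟩ | ⟨_, N, hN⟩
      · have e0 := congrFun (hf.symm.trans hg) 0
        have e1 := congrFun (hf.symm.trans hg) 1
        simp at e0 e1; omega
      · have h2 := hN (N + c) (by omega)
        rw [hf] at h2; simp at h2; nlinarith
    -- einf/e1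
    · rcases hx with ⟨c, d, hc, hd, hf⟩ | ⟨_, N, hN⟩
      · have e0 := congrFun (hy.symm.trans hf) 0
        simp at e0; omega
      · have h2 := hN (N + 1) (by omega)
        rw [hy] at h2; simp at h2
    -- einf/e2
    · obtain ⟨c, hc, hg⟩ := hy
      rcases hx with ⟨c', d, hc', hd, hf⟩ | ⟨_, N, hN⟩
      · have e0 := congrFun (hf.symm.trans hg) 0
        have e1 := congrFun (hf.symm.trans hg) 1
        simp at e0 e1; omega
      · have h2 := hN (N + c) (by omega)
        rw [hg] at h2; simp at h2
        have h3 := Nat.le_self_pow (two_ne_zero) (N + c + 1)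
        omega
    -- einf/ea
    · obtain ⟨c, hc, hg⟩ := hy
      rcases hx with ⟨c', d, hc', hd, hf⟩ | ⟨_, N, hN⟩
      · have e0 := congrFun (hf.symm.trans hg) 0
        have e1 := congrFun (hf.symm.trans hg) 1
        simp at e0 e1; omega
      · have h2 := hN (N + c) (by omega)
        rw [hg] at h2; simp at h2; nlinarith
  by_contra hne
  exact key b b' h h' hne

end BminusProof


/-- Every equation valid in ⟨ℕ; +, ·, ↑, 1⟩ (the positive natural numbers)
holds in the four-element algebra B⁻. -/
theorem stmt2 {m : ℕ} (s t : PTerm m)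
    (h : ∀ φ : Fin m → ℕ, (∀ i, 0 < φ i) → s.evalN φ = t.evalN φ) :
    ∀ φ : Fin m → B4, s.evalB φ = t.evalB φ := by
  intro φ
  have psipos : ∀ (b : B4) (n : ℕ), 0 < BminusProof.psi b n := by
    intro b n; cases b <;> simp [BminusProof.psi]
  have key : ∀ u : PTerm m,
      BminusProof.Inv (u.evalB φ) (fun n => u.evalN fun i => BminusProof.psi (φ i) n) := by
    intro u
    induction u with
    | var i =>
      show BminusProof.Inv (φ i) (fun n => BminusProof.psi (φ i) n)
      cases φ i
      · rfl
      · exact ⟨2, le_refl 2, rfl⟩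
      · exact ⟨1, le_refl 1, by funext n; simp [BminusProof.psi]⟩
      · exact Or.inr ⟨fun n => Nat.one_le_pow 2 (n + 1) n.succ_pos,
          0, fun n _ => le_refl _⟩
    | one => rfl
    | add s t ihs iht => exact BminusProof.inv_add ihs iht
    | mul s t ihs iht => exact BminusProof.inv_mul ihs iht
    | pow s t ihs iht => exact BminusProof.inv_pow ihs iht
  have hfg : (fun n => s.evalN fun i => BminusProof.psi (φ i) n)
      = (fun n => t.evalN fun i => BminusProof.psi (φ i) n) := by
    funext n
    exact h _ (fun i => psipos (φ i) n)
  have hs := key s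
  rw [hfg] at hs
  exact BminusProof.inv_unique hs (key t)
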